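/- For all real $x \geq 1$ and all integers $k \geq 0$, $(k+1)^4 e^{-2\pi x (k+1)^2} < (1 + \sqrt{2})\,(k + \tfrac{1}{2})^4 e^{-2\pi x (k+\frac{1}{2})^2}$. Consequently, the function $g(x) = \vartheta_3(0, 2ix) - (1+\sqrt{2})\,\vartheta_2(0, 2ix)$ satisfies $g''(x) < 0$ for all $x \geq 1$. -/

import Mathlib

open Real Set

private lemma part1' (x : ℝ) (hx : 1 ≤ x) (k : ℕ) :
    ((k : ℝ) + 1)^4 * Real.exp (-2 * Real.pi * x * ((k : ℝ) + 1)^2)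
      < (1 + Real.sqrt 2) * ((k : ℝ) + 1/2)^4
          * Real.exp (-2 * Real.pi * x * ((k : ℝ) + 1/2)^2) := by
  set a : ℝ := (k : ℝ) + 1 with ha
  set b : ℝ := (k : ℝ) + 1/2 with hb
  have hk0 : (0:ℝ) ≤ (k:ℝ) := Nat.cast_nonneg k
  have hb0 : 0 < b := by rw [hb]; linarith
  have ha0 : 0 < a := by rw [ha]; linarith
  have hE : 0 < Real.exp (-2 * Real.pi * x * b^2) := Real.exp_pos _
  have hpi := Real.pi_gt_three
  have hexp1 : Real.exp (-2 * Real.pi * x * a^2)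
      ≤ Real.exp (-2 * Real.pi * x * b^2) * Real.exp (-(3 * Real.pi / 2)) := by
    rw [← Real.exp_add]
    apply Real.exp_le_exp.mpr
    have h1 : a^2 - b^2 = (k:ℝ) + 3/4 := by rw [ha, hb]; ring
    have hq : (3:ℝ)/4 ≤ x * ((k:ℝ) + 3/4) := by nlinarith
    have h2 : 3*Real.pi/2 ≤ 2*Real.pi*x*(a^2-b^2) := by
      rw [h1]
      nlinarith [Real.pi_pos]
    have h3 : 2*Real.pi*x*(a^2-b^2) = 2*Real.pi*x*a^2 - 2*Real.pi*x*b^2 := by ring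
    linarith
  have ha4 : a^4 ≤ 16 * b^4 := by
    have hab : a ≤ 2 * b := by rw [ha, hb]; linarith
    have := pow_le_pow_left₀ ha0.le hab 4
    nlinarith [this]
  have hsmall : 16 * Real.exp (-(3 * Real.pi / 2)) < 1 := by
    rw [Real.exp_neg]
    rw [mul_inv_lt_iff₀ (Real.exp_pos _), one_mul]
    have h4 : Real.exp 4 ≤ Real.exp (3 * Real.pi / 2) := Real.exp_le_exp.mpr (by linarith)
    have he : (2:ℝ) < Real.exp 1 := by
      have := Real.exp_one_gt_d9; linarith
    have h14 : Real.exp 4 = Real.exp 1 ^ (4:ℕ) := by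
      rw [← Real.exp_nat_mul]; norm_num
    have h16 : (2:ℝ)^(4:ℕ) < Real.exp 1 ^ (4:ℕ) := by
      apply pow_lt_pow_left₀ he (by norm_num) (by norm_num)
    norm_num at h16
    linarith
  have hc : (1:ℝ) ≤ 1 + Real.sqrt 2 := by nlinarith [Real.sqrt_nonneg 2]
  calc a^4 * Real.exp (-2 * Real.pi * x * a^2)
      ≤ a^4 * (Real.exp (-2 * Real.pi * x * b^2) * Real.exp (-(3 * Real.pi / 2))) := by
        apply mul_le_mul_of_nonneg_left hexp1 (by positivity)
    _ ≤ 16 * b^4 * (Real.exp (-2 * Real.pi * x * b^2) * Real.exp (-(3 * Real.pi / 2))) := by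
        apply mul_le_mul_of_nonneg_right ha4 (by positivity)
    _ = (16 * Real.exp (-(3 * Real.pi / 2))) * (b^4 * Real.exp (-2 * Real.pi * x * b^2)) := by ring
    _ < 1 * (b^4 * Real.exp (-2 * Real.pi * x * b^2)) := by
        apply mul_lt_mul_of_pos_right hsmall (by positivity)
    _ ≤ (1 + Real.sqrt 2) * (b^4 * Real.exp (-2 * Real.pi * x * b^2)) := by
        rw [one_mul]
        exact le_mul_of_one_le_left (by positivity) hc
    _ = (1 + Real.sqrt 2) * b^4 * Real.exp (-2 * Real.pi * x * b^2) := by ring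

private noncomputable def u0 : ℤ → ℝ :=
  fun k => ((k.natAbs : ℝ) + 1)^4 * (Real.exp Real.pi * Real.exp (-Real.pi) ^ k.natAbs)

private lemma base_summable :
    Summable (fun n : ℕ => ((n:ℝ) + 1)^4 * Real.exp (-Real.pi) ^ n) := by
  have hr : ‖Real.exp (-Real.pi)‖ < 1 := by
    rw [Real.norm_eq_abs, abs_of_nonneg (Real.exp_nonneg _)]
    exact Real.exp_lt_one_iff.mpr (by linarith [Real.pi_pos])
  have h := summable_pow_mul_geometric_of_norm_lt_one (R := ℝ) 4 hr
  have h2 := h.comp_injective (add_left_injective 1)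
  have h3 := h2.mul_left (Real.exp (-Real.pi))⁻¹
  apply h3.congr
  intro n
  have hne : Real.exp (-Real.pi) ≠ 0 := Real.exp_ne_zero _
  simp only [Function.comp]
  push_cast
  field_simp
  ring

private lemma summable_u0 : Summable u0 := by
  apply Summable.of_nat_of_neg_add_one
  · apply (base_summable.mul_left (Real.exp Real.pi)).congr
    intro n
    simp only [u0, Int.natAbs_natCast]
    ring
  · have h2 := base_summable.comp_injective (add_left_injective 1)
    apply (h2.mul_left (Real.exp Real.pi)).congr
    intro n
    have hna : ((-((n:ℤ)+1))).natAbs = n + 1 := by omega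
    simp only [u0, hna, Function.comp]
    push_cast
    ring

private lemma bound_u0 {j : ℕ} (hj : j ≤ 4) {d : ℝ} (hd0 : 0 ≤ d) (hd : d ≤ 1/2)
    {y : ℝ} (hy : (1:ℝ)/2 < y) (k : ℤ) :
    |(k:ℝ) + d| ^ j * Real.exp (-2 * Real.pi * y * ((k:ℝ) + d)^2) ≤ u0 k := by
  set a : ℝ := (k:ℝ) + d with hadef
  set n : ℕ := k.natAbs with hndef
  have habs : |(k:ℝ)| = (n:ℝ) := by
    rw [Nat.cast_natAbs, Int.cast_abs]
  have h1 : |a| ≤ (n:ℝ) + 1 := by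
    calc |a| ≤ |(k:ℝ)| + |d| := abs_add_le _ _
      _ ≤ (n:ℝ) + 1 := by rw [habs, abs_of_nonneg hd0]; linarith
  have h2 : (n:ℝ) - 1 ≤ a^2 := by
    rcases le_or_gt 0 k with hk | hk
    · have hkn : (k:ℝ) = (n:ℝ) := by
        rw [← habs, abs_of_nonneg (by exact_mod_cast hk)]
      have han : (n:ℝ) ≤ a := by rw [hadef, hkn]; linarith
      have hn0 : (0:ℝ) ≤ (n:ℝ) := Nat.cast_nonneg n
      nlinarith [sq_nonneg ((n:ℝ) - 1)]
    · have hkn : (k:ℝ) = -(n:ℝ) := by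
        rw [← habs, abs_of_nonpos (by exact_mod_cast hk.le)]; ring
      have hn1 : (1:ℝ) ≤ (n:ℝ) := by
        have : 1 ≤ n := by omega
        exact_mod_cast this
      have hdn : d * (n:ℝ) ≤ (n:ℝ)/2 := by nlinarith
      have : a = -(n:ℝ) + d := by rw [hadef, hkn]
      rw [this]
      nlinarith [sq_nonneg ((n:ℝ) - 1), sq_nonneg d]
  have h3 : Real.exp (-2 * Real.pi * y * a^2) ≤ Real.exp Real.pi * Real.exp (-Real.pi) ^ n := by
    have e1 : Real.exp (-2 * Real.pi * y * a^2) ≤ Real.exp (-Real.pi * a^2) := by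
      apply Real.exp_le_exp.mpr
      have hnn : 0 ≤ Real.pi * (2*y - 1) * a^2 :=
        mul_nonneg (mul_nonneg Real.pi_pos.le (by linarith)) (sq_nonneg a)
      have heq : -Real.pi * a^2 - (-2 * Real.pi * y * a^2) = Real.pi * (2*y - 1) * a^2 := by ring
      linarith
    have e2 : Real.exp (-Real.pi * a^2) ≤ Real.exp (-Real.pi * ((n:ℝ) - 1)) := by
      apply Real.exp_le_exp.mpr
      nlinarith [Real.pi_pos]
    have e3 : Real.exp (-Real.pi * ((n:ℝ) - 1)) = Real.exp Real.pi * Real.exp (-Real.pi) ^ n := by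
      rw [← Real.exp_nat_mul, ← Real.exp_add]
      congr 1
      ring
    linarith
  have h4 : |a| ^ j ≤ ((n:ℝ) + 1)^4 := by
    calc |a| ^ j ≤ ((n:ℝ) + 1) ^ j := pow_le_pow_left₀ (abs_nonneg a) h1 j
      _ ≤ ((n:ℝ) + 1)^4 := pow_le_pow_right₀ (by linarith [Nat.cast_nonneg (α := ℝ) n]) hj
  calc |a| ^ j * Real.exp (-2 * Real.pi * y * a^2)
      ≤ ((n:ℝ) + 1)^4 * (Real.exp Real.pi * Real.exp (-Real.pi) ^ n) :=
        mul_le_mul h4 h3 (Real.exp_nonneg _) (by positivity)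
    _ = u0 k := rfl

private noncomputable def FF (d : ℝ) : ℤ → ℝ → ℝ :=
  fun k y => Real.exp (-2 * Real.pi * y * ((k:ℝ) + d)^2)

private noncomputable def FF1 (d : ℝ) : ℤ → ℝ → ℝ :=
  fun k y => (-2 * Real.pi * ((k:ℝ) + d)^2) * Real.exp (-2 * Real.pi * y * ((k:ℝ) + d)^2)

private noncomputable def FF2 (d : ℝ) : ℤ → ℝ → ℝ :=
  fun k y => (2 * Real.pi * ((k:ℝ) + d)^2)^2 * Real.exp (-2 * Real.pi * y * ((k:ℝ) + d)^2)

private lemma hasDerivAt_FF (d : ℝ) (k : ℤ) (y : ℝ) : HasDerivAt (FF d k) (FF1 d k y) y := by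
  have key : FF d k = fun z => Real.exp ((-2 * Real.pi * ((k:ℝ) + d)^2) * z) := by
    funext z; simp only [FF]; ring_nf
  rw [key]
  have h := ((hasDerivAt_id y).const_mul (-2 * Real.pi * ((k:ℝ) + d)^2)).exp
  refine h.congr_deriv (Eq.symm ?_)
  simp only [FF1, id_eq, mul_one]
  rw [show (-2 * Real.pi * ((k:ℝ) + d)^2) * y = -2 * Real.pi * y * ((k:ℝ) + d)^2 by ring]
  ring

private lemma hasDerivAt_FF1 (d : ℝ) (k : ℤ) (y : ℝ) : HasDerivAt (FF1 d k) (FF2 d k y) y := by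
  have key : FF1 d k = fun z =>
      (-2 * Real.pi * ((k:ℝ) + d)^2) * Real.exp ((-2 * Real.pi * ((k:ℝ) + d)^2) * z) := by
    funext z; simp only [FF1]; ring_nf
  rw [key]
  have h := (((hasDerivAt_id y).const_mul (-2 * Real.pi * ((k:ℝ) + d)^2)).exp).const_mul
    (-2 * Real.pi * ((k:ℝ) + d)^2)
  refine h.congr_deriv (Eq.symm ?_)
  simp only [FF2, id_eq, mul_one]
  rw [show (-2 * Real.pi * ((k:ℝ) + d)^2) * y = -2 * Real.pi * y * ((k:ℝ) + d)^2 by ring]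
  ring

private lemma norm_FF_le {d : ℝ} (hd0 : 0 ≤ d) (hd : d ≤ 1/2) {y : ℝ} (hy : (1:ℝ)/2 < y)
    (k : ℤ) : ‖FF d k y‖ ≤ u0 k := by
  have h := bound_u0 (j := 0) (by norm_num) hd0 hd hy k
  simpa [FF, Real.norm_eq_abs, abs_of_nonneg (Real.exp_nonneg _)] using h

private lemma norm_FF1_le {d : ℝ} (hd0 : 0 ≤ d) (hd : d ≤ 1/2) {y : ℝ} (hy : (1:ℝ)/2 < y)
    (k : ℤ) : ‖FF1 d k y‖ ≤ 2 * Real.pi * u0 k := by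
  have h := bound_u0 (j := 2) (by norm_num) hd0 hd hy k
  have hpi := Real.pi_pos
  rw [sq_abs] at h
  have heq : ‖FF1 d k y‖
      = 2 * Real.pi * (((k:ℝ) + d)^2 * Real.exp (-2 * Real.pi * y * ((k:ℝ) + d)^2)) := by
    rw [Real.norm_eq_abs]
    simp only [FF1]
    rw [abs_mul, abs_of_nonneg (Real.exp_nonneg _),
      abs_of_nonpos (by nlinarith [sq_nonneg ((k:ℝ) + d)] : -2 * Real.pi * ((k:ℝ) + d)^2 ≤ 0)]
    ring
  rw [heq]
  exact mul_le_mul_of_nonneg_left h (by positivity)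

private lemma norm_FF2_le {d : ℝ} (hd0 : 0 ≤ d) (hd : d ≤ 1/2) {y : ℝ} (hy : (1:ℝ)/2 < y)
    (k : ℤ) : ‖FF2 d k y‖ ≤ 4 * Real.pi^2 * u0 k := by
  have h := bound_u0 (j := 4) (le_refl 4) hd0 hd hy k
  have hpi := Real.pi_pos
  rw [pow_abs, abs_of_nonneg (by positivity : (0:ℝ) ≤ ((k:ℝ) + d)^4)] at h
  have heq : ‖FF2 d k y‖
      = 4 * Real.pi^2 * (((k:ℝ) + d)^4 * Real.exp (-2 * Real.pi * y * ((k:ℝ) + d)^2)) := by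
    rw [Real.norm_eq_abs]
    simp only [FF2]
    rw [abs_mul, abs_of_nonneg (Real.exp_nonneg _),
      abs_of_nonneg (by positivity : (0:ℝ) ≤ (2 * Real.pi * ((k:ℝ) + d)^2)^2)]
    ring
  rw [heq]
  exact mul_le_mul_of_nonneg_left h (by positivity)

private lemma main_deriv {d : ℝ} (hd0 : 0 ≤ d) (hd : d ≤ 1/2) {y : ℝ}
    (hy : y ∈ Set.Ioi ((1:ℝ)/2)) :
    HasDerivAt (fun z => ∑' k : ℤ, FF d k z) (∑' k : ℤ, FF1 d k y) y ∧
    HasDerivAt (fun z => ∑' k : ℤ, FF1 d k z) (∑' k : ℤ, FF2 d k y) y := by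
  have h1mem : (1:ℝ) ∈ Set.Ioi ((1:ℝ)/2) := by norm_num
  have hsum0 : Summable (fun k : ℤ => FF d k 1) :=
    Summable.of_norm_bounded summable_u0 (fun k => norm_FF_le hd0 hd (by norm_num) k)
  have hsum1 : Summable (fun k : ℤ => FF1 d k 1) :=
    Summable.of_norm_bounded (summable_u0.mul_left (2 * Real.pi))
      (fun k => norm_FF1_le hd0 hd (by norm_num) k)
  constructor
  · exact hasDerivAt_tsum_of_isPreconnected (summable_u0.mul_left (2 * Real.pi))
      isOpen_Ioi isPreconnected_Ioi
      (fun k z _ => hasDerivAt_FF d k z)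
      (fun k z hz => norm_FF1_le hd0 hd hz k)
      h1mem hsum0 hy
  · exact hasDerivAt_tsum_of_isPreconnected (summable_u0.mul_left (4 * Real.pi^2))
      isOpen_Ioi isPreconnected_Ioi
      (fun k z _ => hasDerivAt_FF1 d k z)
      (fun k z hz => norm_FF2_le hd0 hd hz k)
      h1mem hsum1 hy

theorem theta_diff_concave :
    (∀ x : ℝ, 1 ≤ x → ∀ k : ℕ,
      ((k : ℝ) + 1)^4 * Real.exp (-2 * Real.pi * x * ((k : ℝ) + 1)^2)
        < (1 + Real.sqrt 2) * ((k : ℝ) + 1/2)^4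
            * Real.exp (-2 * Real.pi * x * ((k : ℝ) + 1/2)^2))
    ∧ (∀ x : ℝ, 1 ≤ x →
        deriv (deriv (fun y : ℝ =>
          (∑' k : ℤ, Real.exp (-2 * Real.pi * y * (k : ℝ)^2))
            - (1 + Real.sqrt 2)
              * ∑' k : ℤ, Real.exp (-2 * Real.pi * y * ((k : ℝ) + 1/2)^2))) x < 0) := by
  constructor
  · exact fun x hx k => part1' x hx k
  · intro x hx
    have hx2 : x ∈ Set.Ioi ((1:ℝ)/2) := by
      simp only [Set.mem_Ioi]; linarith
    have h0a : (0:ℝ) ≤ 0 := le_refl 0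
    have h0b : (0:ℝ) ≤ 1/2 := by norm_num
    have hha : (0:ℝ) ≤ 1/2 := by norm_num
    have hhb : (1:ℝ)/2 ≤ 1/2 := le_refl _
    have hfun : (fun y : ℝ =>
          (∑' k : ℤ, Real.exp (-2 * Real.pi * y * (k : ℝ)^2))
            - (1 + Real.sqrt 2)
              * ∑' k : ℤ, Real.exp (-2 * Real.pi * y * ((k : ℝ) + 1/2)^2))
        = fun y => (∑' k : ℤ, FF 0 k y) - (1 + Real.sqrt 2) * ∑' k : ℤ, FF (1/2) k y := by
      funext y; simp only [FF, add_zero]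
    rw [hfun]
    -- first derivative on Ioi (1/2)
    have hD : ∀ y ∈ Set.Ioi ((1:ℝ)/2),
        HasDerivAt (fun y => (∑' k : ℤ, FF 0 k y) - (1 + Real.sqrt 2) * ∑' k : ℤ, FF (1/2) k y)
          ((∑' k : ℤ, FF1 0 k y) - (1 + Real.sqrt 2) * ∑' k : ℤ, FF1 (1/2) k y) y :=
      fun y hy => ((main_deriv h0a h0b hy).1).sub (((main_deriv hha hhb hy).1).const_mul _)
    have hEq : deriv (fun y => (∑' k : ℤ, FF 0 k y)
          - (1 + Real.sqrt 2) * ∑' k : ℤ, FF (1/2) k y)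
        =ᶠ[nhds x] fun y => (∑' k : ℤ, FF1 0 k y) - (1 + Real.sqrt 2) * ∑' k : ℤ, FF1 (1/2) k y :=
      Filter.eventuallyEq_of_mem (Ioi_mem_nhds (by linarith : (1:ℝ)/2 < x))
        (fun y hy => (hD y hy).deriv)
    rw [hEq.deriv_eq]
    have hD2 : HasDerivAt
        (fun y => (∑' k : ℤ, FF1 0 k y) - (1 + Real.sqrt 2) * ∑' k : ℤ, FF1 (1/2) k y)
        ((∑' k : ℤ, FF2 0 k x) - (1 + Real.sqrt 2) * ∑' k : ℤ, FF2 (1/2) k x) x :=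
      ((main_deriv h0a h0b hx2).2).sub (((main_deriv hha hhb hx2).2).const_mul _)
    rw [hD2.deriv]
    -- summability facts
    have hx2' : (1:ℝ)/2 < x := by linarith
    have s1 : Summable (fun k : ℤ => FF2 0 k x) :=
      Summable.of_norm_bounded (summable_u0.mul_left (4 * Real.pi^2))
        (fun k => norm_FF2_le h0a h0b hx2' k)
    have s2 : Summable (fun k : ℤ => FF2 (1/2) k x) :=
      Summable.of_norm_bounded (summable_u0.mul_left (4 * Real.pi^2))
        (fun k => norm_FF2_le hha hhb hx2' k)
    have s1n : Summable (fun n : ℕ => FF2 0 (n : ℤ) x) :=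
      s1.comp_injective (fun a b h => by exact_mod_cast h)
    have s1m : Summable (fun n : ℕ => FF2 0 (-((n:ℤ) + 1)) x) :=
      s1.comp_injective (fun a b h => by omega)
    have s2n : Summable (fun n : ℕ => FF2 (1/2) (n : ℤ) x) :=
      s2.comp_injective (fun a b h => by exact_mod_cast h)
    have s2m : Summable (fun n : ℕ => FF2 (1/2) (-((n:ℤ) + 1)) x) :=
      s2.comp_injective (fun a b h => by omega)
    -- evaluate the two integer sums
    have e1 : ∑' k : ℤ, FF2 0 k x
        = (∑' n : ℕ, FF2 0 (n : ℤ) x) + ∑' n : ℕ, FF2 0 (-((n:ℤ) + 1)) x :=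
      tsum_of_nat_of_neg_add_one s1n s1m
    have e2 : ∑' k : ℤ, FF2 (1/2) k x
        = (∑' n : ℕ, FF2 (1/2) (n : ℤ) x) + ∑' n : ℕ, FF2 (1/2) (-((n:ℤ) + 1)) x :=
      tsum_of_nat_of_neg_add_one s2n s2m
    have ezero : ∑' n : ℕ, FF2 0 (n : ℤ) x = ∑' n : ℕ, FF2 0 ((n:ℤ) + 1) x := by
      rw [Summable.tsum_eq_zero_add s1n]
      have hz : FF2 0 ((0:ℕ) : ℤ) x = 0 := by simp [FF2]
      rw [hz, zero_add]
      apply tsum_congr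
      intro n
      congr 1
    have eneg : ∀ n : ℕ, FF2 0 (-((n:ℤ) + 1)) x = FF2 0 ((n:ℤ) + 1) x := by
      intro n; simp only [FF2]; push_cast; ring_nf
    have eneg2 : ∀ n : ℕ, FF2 (1/2) (-((n:ℤ) + 1)) x = FF2 (1/2) (n : ℤ) x := by
      intro n; simp only [FF2]; push_cast; ring_nf
    -- termwise strict comparison
    have key : ∀ n : ℕ, FF2 0 ((n:ℤ) + 1) x < (1 + Real.sqrt 2) * FF2 (1/2) (n : ℤ) x := by
      intro n
      have h := part1' x hx n
      have h4 : (0:ℝ) < 4 * Real.pi^2 := by positivity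
      have l1 : FF2 0 ((n:ℤ) + 1) x
          = 4 * Real.pi^2 * (((n:ℝ) + 1)^4 * Real.exp (-2 * Real.pi * x * ((n:ℝ) + 1)^2)) := by
        simp only [FF2]; push_cast; ring_nf
      have l2 : (1 + Real.sqrt 2) * FF2 (1/2) (n : ℤ) x
          = 4 * Real.pi^2 * ((1 + Real.sqrt 2) * ((n:ℝ) + 1/2)^4
              * Real.exp (-2 * Real.pi * x * ((n:ℝ) + 1/2)^2)) := by
        simp only [FF2]; push_cast; ring_nf
      rw [l1, l2]
      exact mul_lt_mul_of_pos_left h h4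
    have hX : ∑' n : ℕ, FF2 0 ((n:ℤ) + 1) x
        < (1 + Real.sqrt 2) * ∑' n : ℕ, FF2 (1/2) (n : ℤ) x := by
      rw [← tsum_mul_left]
      apply Summable.tsum_lt_tsum_of_nonneg (i := 0)
      · intro n; simp only [FF2]; positivity
      · exact fun n => (key n).le
      · exact key 0
      · exact s2n.mul_left _
    rw [e1, e2, ezero, tsum_congr eneg, tsum_congr eneg2]
    set X := ∑' n : ℕ, FF2 0 ((n:ℤ) + 1) x
    set Y := ∑' n : ℕ, FF2 (1/2) (n : ℤ) x
    linarith
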